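/- Let l be a positive integer, k_c > 0, ρ_d > 0, λ̲ > 0, and 0 < T₀ < T real numbers, θ* ∈ ℝ^l, and let Λ ∈ ℝ^{l×l} be a symmetric matrix with Λ ⪰ λ̲ I_l. Define V_c(θ,p,τ) := (1/4)|p−θ|² + (1/4)|p−θ*|² + (k_c ρ_d τ²/2)(θ−θ*)ᵀΛ(θ−θ*), and η := 1 − T₀²/T² − 1/(2k_cρ_dλ̲T²). Then for all θ, p ∈ ℝ^l, V_c(θ, θ, T₀) − V_c(θ, p, T) ≤ −η V_c(θ, p, T). Moreover, if in addition T² > T₀² + 1/(2k_cλ̲ρ_d), then η ∈ (0,1). -/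

import Mathlib

open Matrix

/-- Inequality (A.8): the critic Lyapunov function contracts by a factor `1 − η`
across the resets `(θ,p,τ) ↦ (θ,θ,T₀)` of the hybrid critic dynamics. -/
theorem stmt_9 (l : ℕ) (hl : 0 < l) (k_c ρd lam T₀ T : ℝ)
    (hk : 0 < k_c) (hρd : 0 < ρd) (hlam : 0 < lam) (hT₀ : 0 < T₀) (hT : T₀ < T)
    (θstar : EuclideanSpace ℝ (Fin l))
    (Λ : Matrix (Fin l) (Fin l) ℝ) (hΛsymm : Λ.IsSymm)
    (hΛ : ∀ θ : EuclideanSpace ℝ (Fin l), lam * ‖θ‖ ^ 2 ≤ θ ⬝ᵥ (Λ *ᵥ θ)) :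
    let Vc : EuclideanSpace ℝ (Fin l) → EuclideanSpace ℝ (Fin l) → ℝ → ℝ := fun θ p τ =>
      (1 / 4) * ‖p - θ‖ ^ 2 + (1 / 4) * ‖p - θstar‖ ^ 2 +
        (k_c * ρd * τ ^ 2 / 2) * ((θ - θstar) ⬝ᵥ (Λ *ᵥ (θ - θstar)))
    let η : ℝ := 1 - T₀ ^ 2 / T ^ 2 - 1 / (2 * k_c * ρd * lam * T ^ 2)
    (∀ θ p : EuclideanSpace ℝ (Fin l), Vc θ θ T₀ - Vc θ p T ≤ -η * Vc θ p T) ∧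
      (T ^ 2 > T₀ ^ 2 + 1 / (2 * k_c * lam * ρd) → η ∈ Set.Ioo (0 : ℝ) 1) := by
  intro Vc η
  have hTpos : (0:ℝ) < T := hT₀.trans hT
  have hT2 : (0:ℝ) < T ^ 2 := by positivity
  have hK : (0:ℝ) < 2 * k_c * ρd * lam * T ^ 2 := by positivity
  constructor
  · intro θ p
    have hQ := hΛ (θ - θstar)
    have hQ0 : (0:ℝ) ≤ (θ - θstar) ⬝ᵥ (Λ *ᵥ (θ - θstar)) :=
      le_trans (by positivity) hQ
    have ha : (0:ℝ) ≤ ‖p - θ‖ ^ 2 := by positivity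
    have hb : (0:ℝ) ≤ ‖p - θstar‖ ^ 2 := by positivity
    have hc1 : (0:ℝ) ≤ T₀ ^ 2 / T ^ 2 := by positivity
    have hc2 : (0:ℝ) ≤ 1 / (2 * k_c * ρd * lam * T ^ 2) := by positivity
    have h4 : ‖θ - θstar‖ ^ 2 ≤ ((θ - θstar) ⬝ᵥ (Λ *ᵥ (θ - θstar))) / lam := by
      rw [le_div_iff₀ hlam]; exact (mul_comm _ _).trans_le hQ
    have h3 : (1 / (2 * k_c * ρd * lam * T ^ 2)) * (k_c * ρd * T ^ 2 / 2 * ((θ - θstar) ⬝ᵥ (Λ *ᵥ (θ - θstar))))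
        = ((θ - θstar) ⬝ᵥ (Λ *ᵥ (θ - θstar))) / (4 * lam) := by
      field_simp; ring
    have h5 : (T₀ ^ 2 / T ^ 2) * (k_c * ρd * T ^ 2 / 2 * ((θ - θstar) ⬝ᵥ (Λ *ᵥ (θ - θstar))))
        = k_c * ρd * T₀ ^ 2 / 2 * ((θ - θstar) ⬝ᵥ (Λ *ᵥ (θ - θstar))) := by
      field_simp
    have h6 : ((θ - θstar) ⬝ᵥ (Λ *ᵥ (θ - θstar))) / (4 * lam) = (((θ - θstar) ⬝ᵥ (Λ *ᵥ (θ - θstar))) / lam) / 4 := by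
      ring
    simp only [Vc, η, sub_self, norm_zero]
    nlinarith [mul_nonneg hc1 ha, mul_nonneg hc1 hb, mul_nonneg hc2 ha, mul_nonneg hc2 hb, h3, h5, h4, h6]
  · intro h
    have e3 : 1 / (2 * k_c * lam * ρd) * (2 * k_c * lam * ρd) = 1 :=
      div_mul_cancel₀ _ (by positivity)
    constructor
    · have h1 : T₀ ^ 2 / T ^ 2 + 1 / (2 * k_c * ρd * lam * T ^ 2) < 1 := by
        rw [div_add_div _ _ hT2.ne' hK.ne', div_lt_one (by positivity)]
        nlinarith [e3, hT2, mul_pos (mul_pos hk hlam) hρd]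
      simp only [η]; linarith
    · simp only [η]
      have : 0 < T₀ ^ 2 / T ^ 2 := by positivity
      have : 0 < 1 / (2 * k_c * ρd * lam * T ^ 2) := by positivity
      linarith
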